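/- Let L be the language with one binary function symbol s and one constant symbol 0. Let B be the L-structure with universe ℕ ∪ {∞} (where ∞ is an extra point not in ℕ), with 0 interpreted as the natural number 0, and s^B(a,b) = 0 if a, b ∈ ℕ and b = a + 1, and s^B(a,b) = 1 otherwise. Then: (i) the identity is the only homomorphism from B to B; and (ii) the substructure A of B with universe ℕ is a proper epic substructure of B in the class {B}, i.e., A ≠ B and any two homomorphisms g, g' : B → B that agree on ℕ are equal. -/

import Mathlib

open FirstOrder FirstOrder.Language

namespace EpicExample

/-- The function symbols of the language `L = {s, 0}`: a single constant symbol `zero`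
and a single binary function symbol `s`. -/
inductive Fns : ℕ → Type
  | zero : Fns 0
  | s : Fns 2

/-- The language with one binary function symbol `s` and one constant symbol `0`. -/
def Lsig : FirstOrder.Language := ⟨Fns, fun _ => Empty⟩

/-- The universe `ℕ ∪ {∞}` of the structure `B`, with `none` playing the role of `∞`. -/
abbrev OB := Option ℕ

/-- The interpretation of the binary symbol `s`:
`s(a,b) = 0` if `a, b ∈ ℕ` and `b = a + 1`, and `s(a,b) = 1` otherwise. -/
def sB : OB → OB → OB
  | some a, some b => if b = a + 1 then some 0 else some 1
  | _, _ => some 1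

instance : Lsig.Structure OB where
  funMap {n} f x :=
    match f with
    | .zero => some 0
    | .s => sB (x 0) (x 1)
  RelMap {n} r _ := r.elim

theorem sB_isSome (a b : OB) : ∃ n : ℕ, sB a b = some n := by
  rcases a with _ | a <;> rcases b with _ | b <;> simp [sB] <;> split <;> simp

/-- The substructure `A` of `B` with universe `ℕ`. -/
def natSub : Lsig.Substructure OB where
  carrier := Set.range some
  fun_mem := fun {n} f x _hx =>
    match n, f with
    | _, Fns.zero => ⟨0, rfl⟩
    | _, Fns.s => (sB_isSome (x 0) (x 1)).elim fun m hm => ⟨m, hm.symm⟩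

/-- Example 7.  In the structure `B` on `ℕ ∪ {∞}` described above:
(i) the identity is the only homomorphism from `B` to `B`; and
(ii) the substructure `A` with universe `ℕ` is a proper epic substructure of `B` in the
class `{B}`: `A ≠ B`, and any two homomorphisms `g, g' : B → B` agreeing on `ℕ` are
equal. -/
theorem identity_only_endomorphism_and_proper_epic :
    (∀ g : OB →[Lsig] OB, g = Hom.id Lsig OB) ∧
    (natSub ≠ ⊤ ∧
      ∀ g g' : OB →[Lsig] OB, (∀ a ∈ natSub, g a = g' a) → g = g') := by
  have key : ∀ g : OB →[Lsig] OB, g = Hom.id Lsig OB := by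
    intro g
    have hz : g (some 0) = some 0 := by
      have := g.map_fun Fns.zero (fun i => i.elim0)
      simpa [Structure.funMap] using this
    have hs : ∀ a b : OB, g (sB a b) = sB (g a) (g b) := by
      intro a b
      have := g.map_fun Fns.s ![a, b]
      simpa [Structure.funMap] using this
    have hnat : ∀ n : ℕ, g (some n) = some n := by
      intro n
      induction n with
      | zero => exact hz
      | succ n ih =>
        have h1 : sB (some n) (some (n + 1)) = some 0 := by simp [sB]
        have h2 := hs (some n) (some (n + 1))
        rw [h1, hz, ih] at h2
        rcases hm : g (some (n + 1)) with _ | m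
        · rw [hm] at h2; simp [sB] at h2
        · rw [hm] at h2
          simp only [sB] at h2
          split at h2
          · next h => rw [h]
          · simp at h2
    have hinf : g none = none := by
      rcases hm : g none with _ | m
      · rfl
      · exfalso
        have h1 : sB none (some (m + 1)) = some 1 := by simp [sB]
        have h2 := hs none (some (m + 1))
        rw [h1, hnat 1, hm, hnat (m + 1)] at h2
        simp [sB] at h2
    apply DFunLike.ext
    intro a
    rcases a with _ | n
    · exact hinf
    · exact hnat n
  refine ⟨key, ?_, fun g g' _ => (key g).trans (key g').symm⟩
  intro h
  have : (none : OB) ∈ natSub := h ▸ Substructure.mem_top none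
  rcases this with ⟨n, hn⟩
  cases hn

end EpicExample
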